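/- Let κ₀ > 0 and let λ̲ > 0 satisfy ⟨z, H_ρ z⟩ ≥ λ̲‖z‖₂² for all z ∈ ℝⁿ and all ρ ∈ [0,ρ₀]. Then for every ρ ∈ (0,ρ₀] and every u⁰ ∈ ℝⁿ with ‖u⁰‖₂ ≤ κ₀, one has |½⟨u⁰−ρg, H_ρ⁻¹(u⁰−ρg)⟩ − ½⟨u⁰, H₀⁻¹u⁰⟩| ≤ κ₃ ρ, where κ₃ := ((κ₀+ρ₀‖g‖₂)/(2λ̲))·(κ₀‖H₀⁻¹‖₂‖H_f‖₂ + ‖g‖₂) + ½κ₀‖H₀⁻¹‖₂‖g‖₂ and ‖·‖₂ on matrices is the operator norm. Consequently, every dual-feasible u with ‖u⁰‖₂ ≤ κ₀ and D(u,0) > −∞ satisfies |D(u,ρ) − D(u,0)| ≤ κ₃ ρ. -/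

import Mathlib

open scoped RealInnerProductSpace
open Finset

noncomputable section

/-- `ℝⁿ` with the Euclidean norm. -/
abbrev Evec (n : ℕ) : Type := EuclideanSpace ℝ (Fin n)

variable {n m : ℕ}

/-- Apply a matrix to a Euclidean vector. -/
def matApply (M : Matrix (Fin n) (Fin n) ℝ) (x : Evec n) : Evec n := Matrix.toEuclideanLin M x

/-- ℓ2 operator norm of a matrix. -/
def opNorm (M : Matrix (Fin n) (Fin n) ℝ) : ℝ :=
  ‖(LinearMap.toContinuousLinearMap (Matrix.toEuclideanLin M))‖

/-- `H_ρ := ρ H_f + H_0`. -/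
def Hmat (Hf H0 : Matrix (Fin n) (Fin n) ℝ) (ρ : ℝ) : Matrix (Fin n) (Fin n) ℝ := ρ • Hf + H0

/-- `l(d,0) = Σ_{i≤m̄} |⟨aⁱ,d⟩+bᵢ| + Σ_{i>m̄} max(⟨aⁱ,d⟩+bᵢ,0)` (indices `i.val < mbar` are
the equality constraints). Note `lpen mbar a b 0 = J⁰`. -/
def lpen (mbar : ℕ) (a : Fin m → Evec n) (b : Fin m → ℝ) (d : Evec n) : ℝ :=
  ∑ i : Fin m, if (i : ℕ) < mbar then |⟪a i, d⟫ + b i| else max (⟪a i, d⟫ + b i) 0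

/-- `J(d,ρ) = ρ⟨g,d⟩ + ½⟨d,H_ρ d⟩ + l(d,0)`. -/
def Jval (mbar : ℕ) (g : Evec n) (a : Fin m → Evec n) (b : Fin m → ℝ)
    (Hf H0 : Matrix (Fin n) (Fin n) ℝ) (ρ : ℝ) (d : Evec n) : ℝ :=
  ρ * ⟪g, d⟫ + (1/2) * ⟪d, matApply (Hmat Hf H0 ρ) d⟫ + lpen mbar a b d

/-- `āⁱ := aⁱ/‖aⁱ‖`. -/
def abar (a : Fin m → Evec n) (i : Fin m) : Evec n := ‖a i‖⁻¹ • a i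

/-- `b̄ᵢ := bᵢ/‖aⁱ‖`. -/
def bbar (a : Fin m → Evec n) (b : Fin m → ℝ) (i : Fin m) : ℝ := b i / ‖a i‖

/-- `Cᵢ`: hyperplane for equality constraints, half-space for inequality constraints. -/
def Cset (mbar : ℕ) (a : Fin m → Evec n) (b : Fin m → ℝ) (i : Fin m) : Set (Evec n) :=
  if (i : ℕ) < mbar then {d | ⟪abar a i, d⟫ + bbar a b i = 0}
  else {d | ⟪abar a i, d⟫ + bbar a b i ≤ 0}

/-- Real-valued support function `δ*(y|C) = sup_{z∈C} ⟨y,z⟫` (via `sSup`). -/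
def suppFn (y : Evec n) (C : Set (Evec n)) : ℝ := sSup ((fun z => ⟪y, z⟫) '' C)

/-- Dual feasibility: `u⁰ + Σᵢ ‖aⁱ‖ uⁱ + u^{m+1} = 0` and `‖uⁱ‖ ≤ 1` for `i = 1,…,m`. -/
def DualFeasible (a : Fin m → Evec n) (u0 : Evec n) (u : Fin m → Evec n) (um1 : Evec n) : Prop :=
  (u0 + ∑ i, ‖a i‖ • u i + um1 = 0) ∧ ∀ i, ‖u i‖ ≤ 1

/-- Real-valued dual objective
`D(u,ρ) = -½⟨u⁰-ρg, H_ρ⁻¹(u⁰-ρg)⟩ - Σᵢ ‖aⁱ‖ δ*(uⁱ|Cᵢ) - δ*(u^{m+1}|X)`. -/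
def Dval (mbar : ℕ) (g : Evec n) (a : Fin m → Evec n) (b : Fin m → ℝ)
    (Hf H0 : Matrix (Fin n) (Fin n) ℝ) (X : Set (Evec n)) (ρ : ℝ)
    (u0 : Evec n) (u : Fin m → Evec n) (um1 : Evec n) : ℝ :=
  -(1/2) * ⟪u0 - ρ • g, matApply (Hmat Hf H0 ρ)⁻¹ (u0 - ρ • g)⟫
    - ∑ i, ‖a i‖ * suppFn (u i) (Cset mbar a b i)
    - suppFn um1 X

/-- Extended-real-valued support function. -/
def suppFnE (y : Evec n) (C : Set (Evec n)) : EReal :=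
  ⨆ z ∈ C, ((⟪y, z⟫ : ℝ) : EReal)

/-- Extended-real-valued dual objective (value in `ℝ ∪ {±∞}`; it is `-∞` when a support
function is `+∞`). -/
def DvalE (mbar : ℕ) (g : Evec n) (a : Fin m → Evec n) (b : Fin m → ℝ)
    (Hf H0 : Matrix (Fin n) (Fin n) ℝ) (X : Set (Evec n)) (ρ : ℝ)
    (u0 : Evec n) (u : Fin m → Evec n) (um1 : Evec n) : EReal :=
  ((-(1/2) * ⟪u0 - ρ • g, matApply (Hmat Hf H0 ρ)⁻¹ (u0 - ρ • g)⟫ : ℝ) : EReal)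
    - ∑ i, (‖a i‖ : EReal) * suppFnE (u i) (Cset mbar a b i)
    - suppFnE um1 X

lemma matApply_mul (A B : Matrix (Fin n) (Fin n) ℝ) (x : Evec n) :
    matApply (A * B) x = matApply A (matApply B x) := by
  simp [matApply, Matrix.toEuclideanLin_apply, Matrix.mulVec_mulVec]

lemma matApply_one (x : Evec n) : matApply 1 x = x := by
  simp [matApply, Matrix.toEuclideanLin_apply]

lemma matApply_norm_le (M : Matrix (Fin n) (Fin n) ℝ) (x : Evec n) :
    ‖matApply M x‖ ≤ opNorm M * ‖x‖ := by
  exact (LinearMap.toContinuousLinearMap (Matrix.toEuclideanLin M)).le_opNorm x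

lemma matApply_symm {M : Matrix (Fin n) (Fin n) ℝ} (hM : M.IsHermitian)
    (x y : Evec n) : ⟪matApply M x, y⟫ = ⟪x, matApply M y⟫ :=
  (Matrix.isHermitian_iff_isSymmetric.mp hM) x y

lemma matApply_inv_cancel {M : Matrix (Fin n) (Fin n) ℝ} (hM : M.PosDef) (x : Evec n) :
    matApply M (matApply M⁻¹ x) = x := by
  rw [← matApply_mul, Matrix.mul_nonsing_inv _ hM.det_pos.ne'.isUnit, matApply_one]

lemma matApply_hmat_expand (Hf H0 : Matrix (Fin n) (Fin n) ℝ) (ρ : ℝ) (x : Evec n) :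
    matApply (ρ • Hf + H0) x = ρ • matApply Hf x + matApply H0 x := by
  simp [matApply, map_add, map_smul, LinearMap.add_apply, LinearMap.smul_apply]

lemma opNorm_nonneg (M : Matrix (Fin n) (Fin n) ℝ) : 0 ≤ opNorm M := norm_nonneg _

lemma key_bound (g : Evec n) (Hf H0 : Matrix (Fin n) (Fin n) ℝ)
    (hHf : Hf.IsHermitian)
    (ρ₀ : ℝ) (hρ₀ : 0 < ρ₀)
    (hpos : ∀ ρ ∈ Set.Icc (0:ℝ) ρ₀, (ρ • Hf + H0).PosDef)
    (κ₀ lamlo : ℝ) (hκ₀ : 0 < κ₀) (hlamlo : 0 < lamlo)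
    (hquad : ∀ ρ ∈ Set.Icc (0:ℝ) ρ₀, ∀ z : Evec n,
      lamlo * ‖z‖ ^ 2 ≤ ⟪z, matApply (ρ • Hf + H0) z⟫)
    (ρ : ℝ) (hρ : ρ ∈ Set.Ioc (0:ℝ) ρ₀) (u0 : Evec n) (hu0 : ‖u0‖ ≤ κ₀) :
    |(1/2) * ⟪u0 - ρ • g, matApply (ρ • Hf + H0)⁻¹ (u0 - ρ • g)⟫
        - (1/2) * ⟪u0, matApply H0⁻¹ u0⟫|
      ≤ (((κ₀ + ρ₀ * ‖g‖) / (2 * lamlo)) * (κ₀ * opNorm H0⁻¹ * opNorm Hf + ‖g‖)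
          + (1/2) * κ₀ * opNorm H0⁻¹ * ‖g‖) * ρ := by
  have hρ0 : 0 < ρ := hρ.1
  have hρmem : ρ ∈ Set.Icc (0:ℝ) ρ₀ := ⟨hρ.1.le, hρ.2⟩
  have hPρ : (ρ • Hf + H0).PosDef := hpos ρ hρmem
  have hP0 : H0.PosDef := by simpa using hpos 0 ⟨le_rfl, hρ₀.le⟩
  set w := matApply (ρ • Hf + H0)⁻¹ (u0 - ρ • g) with hwdef
  set v := matApply H0⁻¹ u0 with hvdef
  have hw : matApply (ρ • Hf + H0) w = u0 - ρ • g := matApply_inv_cancel hPρ _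
  have hv : matApply H0 v = u0 := matApply_inv_cancel hP0 _
  have h1 : ⟪u0 - ρ • g, w⟫ = ⟪w, matApply H0 v⟫ - ρ * ⟪g, w⟫ := by
    rw [inner_sub_left, real_inner_smul_left, ← hv, real_inner_comm]
  have h2 : ⟪u0, v⟫ = ⟪w, matApply H0 v⟫ + ρ * ⟪w, matApply Hf v⟫ + ρ * ⟪g, v⟫ := by
    have hu0eq : u0 = matApply (ρ • Hf + H0) w + ρ • g := by
      rw [hw]; abel
    rw [hu0eq, inner_add_left, real_inner_smul_left,
      matApply_symm hPρ.1, matApply_hmat_expand, inner_add_right,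
      real_inner_smul_right]
    ring
  have hE : (1/2) * ⟪u0 - ρ • g, w⟫ - (1/2) * ⟪u0, v⟫
      = -(ρ/2) * (⟪g, w⟫ + ⟪w, matApply Hf v⟫ + ⟪g, v⟫) := by
    rw [h1, h2]; ring
  -- bound on ‖w‖
  have hG : (0:ℝ) ≤ ‖g‖ := norm_nonneg g
  have hnorm : ‖u0 - ρ • g‖ ≤ κ₀ + ρ₀ * ‖g‖ := by
    calc ‖u0 - ρ • g‖ ≤ ‖u0‖ + ‖ρ • g‖ := norm_sub_le _ _
      _ ≤ κ₀ + ρ₀ * ‖g‖ := by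
          rw [norm_smul, Real.norm_eq_abs, abs_of_pos hρ.1]
          exact add_le_add hu0 (mul_le_mul_of_nonneg_right hρ.2 hG)
  have hwq : lamlo * ‖w‖ ^ 2 ≤ ‖w‖ * (κ₀ + ρ₀ * ‖g‖) := by
    have h := hquad ρ hρmem w
    rw [hw] at h
    exact h.trans ((real_inner_le_norm _ _).trans
      (mul_le_mul_of_nonneg_left hnorm (norm_nonneg w)))
  have hw_le : ‖w‖ ≤ (κ₀ + ρ₀ * ‖g‖) / lamlo := by
    rcases eq_or_lt_of_le (norm_nonneg w) with h | h
    · rw [← h]; positivity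
    · rw [le_div_iff₀ hlamlo]
      nlinarith [hwq]
  have hN0 : 0 ≤ opNorm (H0⁻¹) := opNorm_nonneg _
  have hNf : 0 ≤ opNorm Hf := opNorm_nonneg _
  have hv_le : ‖v‖ ≤ opNorm H0⁻¹ * κ₀ :=
    (matApply_norm_le _ _).trans (mul_le_mul_of_nonneg_left hu0 hN0)
  have hfv_le : ‖matApply Hf v‖ ≤ opNorm Hf * (opNorm H0⁻¹ * κ₀) :=
    (matApply_norm_le _ _).trans (mul_le_mul_of_nonneg_left hv_le hNf)
  have habs : |⟪g, w⟫ + ⟪w, matApply Hf v⟫ + ⟪g, v⟫|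
      ≤ ‖g‖ * ‖w‖ + ‖w‖ * ‖matApply Hf v‖ + ‖g‖ * ‖v‖ := by
    calc |⟪g, w⟫ + ⟪w, matApply Hf v⟫ + ⟪g, v⟫|
        ≤ |⟪g, w⟫ + ⟪w, matApply Hf v⟫| + |⟪g, v⟫| := abs_add_le _ _
      _ ≤ |⟪g, w⟫| + |⟪w, matApply Hf v⟫| + |⟪g, v⟫| := by
          exact add_le_add (abs_add_le _ _) le_rfl
      _ ≤ ‖g‖ * ‖w‖ + ‖w‖ * ‖matApply Hf v‖ + ‖g‖ * ‖v‖ := by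
          gcongr <;> exact abs_real_inner_le_norm _ _
  calc |(1/2) * ⟪u0 - ρ • g, w⟫ - (1/2) * ⟪u0, v⟫|
      = (ρ/2) * |⟪g, w⟫ + ⟪w, matApply Hf v⟫ + ⟪g, v⟫| := by
        rw [hE, abs_mul, abs_neg, abs_of_pos (by linarith : (0:ℝ) < ρ/2)]
    _ ≤ (ρ/2) * (‖g‖ * ‖w‖ + ‖w‖ * ‖matApply Hf v‖ + ‖g‖ * ‖v‖) := by
        exact mul_le_mul_of_nonneg_left habs (by linarith)
    _ ≤ (ρ/2) * (‖g‖ * ((κ₀ + ρ₀ * ‖g‖) / lamlo)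
          + ((κ₀ + ρ₀ * ‖g‖) / lamlo) * (opNorm Hf * (opNorm H0⁻¹ * κ₀))
          + ‖g‖ * (opNorm H0⁻¹ * κ₀)) :=
        mul_le_mul_of_nonneg_left (by gcongr <;> positivity) (by linarith)
    _ = (((κ₀ + ρ₀ * ‖g‖) / (2 * lamlo)) * (κ₀ * opNorm H0⁻¹ * opNorm Hf + ‖g‖)
          + (1/2) * κ₀ * opNorm H0⁻¹ * ‖g‖) * ρ := by
        field_simp
        ring

/-- Let `κ₀ > 0` and let `λ̲ > 0` satisfy `⟨z, H_ρ z⟩ ≥ λ̲‖z‖₂²` for all `z` and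
all `ρ ∈ [0,ρ₀]`.  Then for every `ρ ∈ (0,ρ₀]` and every `u⁰` with `‖u⁰‖₂ ≤ κ₀`, one has
`|½⟨u⁰−ρg, H_ρ⁻¹(u⁰−ρg)⟩ − ½⟨u⁰, H₀⁻¹u⁰⟩| ≤ κ₃ ρ`, where
`κ₃ := ((κ₀+ρ₀‖g‖₂)/(2λ̲))·(κ₀‖H₀⁻¹‖₂‖H_f‖₂ + ‖g‖₂) + ½κ₀‖H₀⁻¹‖₂‖g‖₂`.
Consequently, every dual-feasible `u` with `‖u⁰‖₂ ≤ κ₀` and `D(u,0) > −∞` (i.e. all the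
support-function values are finite) satisfies `|D(u,ρ) − D(u,0)| ≤ κ₃ ρ`. -/
theorem statement_3
    (n m mbar : ℕ) (hn : 1 ≤ n) (hmm : mbar ≤ m)
    (g : Evec n) (a : Fin m → Evec n) (ha : ∀ i, a i ≠ 0) (b : Fin m → ℝ)
    (Hf H0 : Matrix (Fin n) (Fin n) ℝ) (hHf : Hf.IsHermitian) (hH0 : H0.IsHermitian)
    (ρ₀ : ℝ) (hρ₀ : 0 < ρ₀)
    (hpos : ∀ ρ ∈ Set.Icc (0:ℝ) ρ₀, (Hmat Hf H0 ρ).PosDef)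
    (X : Set (Evec n)) (hXne : X.Nonempty) (hXcp : IsCompact X)
    (hXcv : Convex ℝ X) (hX0 : (0 : Evec n) ∈ X)
    (κ₀ lamlo : ℝ) (hκ₀ : 0 < κ₀) (hlamlo : 0 < lamlo)
    (hquad : ∀ ρ ∈ Set.Icc (0:ℝ) ρ₀, ∀ z : Evec n,
      lamlo * ‖z‖ ^ 2 ≤ ⟪z, matApply (Hmat Hf H0 ρ) z⟫) :
    ∀ ρ ∈ Set.Ioc (0:ℝ) ρ₀,
      (∀ u0 : Evec n, ‖u0‖ ≤ κ₀ →
        |(1/2) * ⟪u0 - ρ • g, matApply (Hmat Hf H0 ρ)⁻¹ (u0 - ρ • g)⟫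
            - (1/2) * ⟪u0, matApply H0⁻¹ u0⟫|
          ≤ (((κ₀ + ρ₀ * ‖g‖) / (2 * lamlo)) * (κ₀ * opNorm H0⁻¹ * opNorm Hf + ‖g‖)
              + (1/2) * κ₀ * opNorm H0⁻¹ * ‖g‖) * ρ) ∧
      (∀ (u0 : Evec n) (u : Fin m → Evec n) (um1 : Evec n),
        DualFeasible a u0 u um1 → ‖u0‖ ≤ κ₀ →
        (∀ i, BddAbove ((fun z => ⟪u i, z⟫) '' Cset mbar a b i)) →
        BddAbove ((fun z => ⟪um1, z⟫) '' X) →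
        |Dval mbar g a b Hf H0 X ρ u0 u um1 - Dval mbar g a b Hf H0 X 0 u0 u um1|
          ≤ (((κ₀ + ρ₀ * ‖g‖) / (2 * lamlo)) * (κ₀ * opNorm H0⁻¹ * opNorm Hf + ‖g‖)
              + (1/2) * κ₀ * opNorm H0⁻¹ * ‖g‖) * ρ) := by
  intro ρ hρ
  have part1 : ∀ u0 : Evec n, ‖u0‖ ≤ κ₀ →
      |(1/2) * ⟪u0 - ρ • g, matApply (Hmat Hf H0 ρ)⁻¹ (u0 - ρ • g)⟫
          - (1/2) * ⟪u0, matApply H0⁻¹ u0⟫|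
        ≤ (((κ₀ + ρ₀ * ‖g‖) / (2 * lamlo)) * (κ₀ * opNorm H0⁻¹ * opNorm Hf + ‖g‖)
            + (1/2) * κ₀ * opNorm H0⁻¹ * ‖g‖) * ρ := fun u0 hu0 =>
    key_bound g Hf H0 hHf ρ₀ hρ₀ hpos κ₀ lamlo hκ₀ hlamlo hquad ρ hρ u0 hu0
  refine ⟨part1, fun u0 u um1 _ hu0 _ _ => ?_⟩
  have hD : Dval mbar g a b Hf H0 X ρ u0 u um1 - Dval mbar g a b Hf H0 X 0 u0 u um1
      = -((1/2) * ⟪u0 - ρ • g, matApply (Hmat Hf H0 ρ)⁻¹ (u0 - ρ • g)⟫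
          - (1/2) * ⟪u0, matApply H0⁻¹ u0⟫) := by
    have h0 : Hmat Hf H0 0 = H0 := by simp [Hmat]
    simp only [Dval, h0, zero_smul, sub_zero]
    ring
  rw [hD, abs_neg]
  exact part1 u0 hu0
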